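/- Let $x_0,\ldots,x_t,\beta$ be integers and define $x_\nu:=\beta+\min_{j_1+j_2=\nu-1,\,j_1,j_2\ge 0}(x_{j_1}+x_{j_2})$ for $\nu\ge t+1$. Let $p\in\arg\min_{0\le j\le t}(x_j+\beta)/(j+1)$, and set $y_\nu:=(p+1)(x_\nu+\beta)-(x_p+\beta)(\nu+1)$. Then $y_\nu\ge 0$ for all $\nu\ge 0$, and $y_\nu\le y_{\nu-(p+1)}$ for all $\nu\ge t+1$. -/
import Mathlib


theorem stmt19 (t : ℕ) (β : ℤ) (x : ℕ → ℤ)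
    (hrec : ∀ ν : ℕ, ∀ _hν : t + 1 ≤ ν,
      x ν = β + (Finset.range ν).inf' (Finset.nonempty_range_iff.mpr (by omega))
        (fun j => x j + x (ν - 1 - j)))
    (p : ℕ) (hp : p ≤ t)
    (hmin : ∀ j : ℕ, j ≤ t → ((x p : ℚ) + β) / (p + 1) ≤ ((x j : ℚ) + β) / (j + 1))
    (y : ℕ → ℤ)
    (hy : ∀ ν : ℕ, y ν = (p + 1) * (x ν + β) - (x p + β) * (ν + 1)) :
    (∀ ν : ℕ, 0 ≤ y ν) ∧ (∀ ν : ℕ, t + 1 ≤ ν → y ν ≤ y (ν - (p + 1))) := by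
  -- base: nonnegativity for ν ≤ t
  have hbase : ∀ ν, ν ≤ t → 0 ≤ y ν := by
    intro ν hν
    have h := hmin ν hν
    rw [div_le_div_iff₀ (by positivity) (by positivity)] at h
    have h2 : ((x p : ℚ) + β) * (ν + 1) ≤ ((x ν : ℚ) + β) * (p + 1) := h
    have h3 : (x p + β) * ((ν : ℤ) + 1) ≤ (x ν + β) * ((p : ℤ) + 1) := by
      exact_mod_cast h2
    rw [hy]; linarith
  have hyp0 : y p = 0 := by rw [hy]; ring
  -- y ν ≤ y j + y (ν-1-j) for each j < ν, when ν ≥ t+1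
  have hle : ∀ ν, t + 1 ≤ ν → ∀ j, j < ν → y ν ≤ y j + y (ν - 1 - j) := by
    intro ν hν j hj
    have hx := hrec ν hν
    have hinf : (Finset.range ν).inf' (Finset.nonempty_range_iff.mpr (by omega))
        (fun j => x j + x (ν - 1 - j)) ≤ x j + x (ν - 1 - j) :=
      Finset.inf'_le _ (Finset.mem_range.mpr hj)
    have hxν : x ν ≤ β + (x j + x (ν - 1 - j)) := by rw [hx]; linarith
    have hk : ((ν - 1 - j : ℕ) : ℤ) = (ν : ℤ) - 1 - j := by omega
    have hmul : ((p : ℤ) + 1) * (x ν + β) ≤ ((p : ℤ) + 1) * (x j + x (ν - 1 - j) + 2 * β) := by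
      apply mul_le_mul_of_nonneg_left (by linarith) (by positivity)
    rw [hy ν, hy j, hy (ν - 1 - j), hk]
    nlinarith [hmul]
  -- equality at some j
  have heq : ∀ ν, t + 1 ≤ ν → ∃ j < ν, y ν = y j + y (ν - 1 - j) := by
    intro ν hν
    have hx := hrec ν hν
    obtain ⟨j, hjmem, hjeq⟩ := Finset.exists_mem_eq_inf'
      (Finset.nonempty_range_iff.mpr (by omega : ν ≠ 0))
      (fun j => x j + x (ν - 1 - j))
    have hj : j < ν := Finset.mem_range.mp hjmem
    refine ⟨j, hj, ?_⟩
    have hxν : x ν = β + (x j + x (ν - 1 - j)) := by rw [hx, hjeq]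
    have hk : ((ν - 1 - j : ℕ) : ℤ) = (ν : ℤ) - 1 - j := by omega
    rw [hy ν, hy j, hy (ν - 1 - j), hk, hxν]; ring
  -- nonnegativity by strong induction
  have hnn : ∀ ν, 0 ≤ y ν := by
    intro ν
    induction ν using Nat.strong_induction_on with
    | _ ν ih =>
      by_cases hν : ν ≤ t
      · exact hbase ν hν
      · have hν' : t + 1 ≤ ν := by omega
        obtain ⟨j, hj, hjeq⟩ := heq ν hν'
        have h1 := ih j hj
        have h2 := ih (ν - 1 - j) (by omega)
        omega
  refine ⟨hnn, ?_⟩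
  intro ν hν
  have h := hle ν hν p (by omega)
  have : ν - 1 - p = ν - (p + 1) := by omega
  rw [this, hyp0] at h
  omega
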